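/- Let n ≥ 1 and let G be a simple graph on the vertex set Fin n. The star-subalgebra of Mₙ(ℂ) generated by the diagonal matrices A together with the edge matrix units U_G equals all of Mₙ(ℂ) (i.e., U_G is a graphing) if and only if the graph G is connected. -/

import Mathlib

open Matrix

/-- A diagonal-normalizing partial isometry in `Mₙ(ℂ)`: a partial isometry `u`
such that `u d uᴴ` and `uᴴ d u` are diagonal for every diagonal matrix `d`. -/
def IsDNPI {n : ℕ} (u : Matrix (Fin n) (Fin n) ℂ) : Prop :=
  u * uᴴ * u = u ∧
    ∀ d : Matrix (Fin n) (Fin n) ℂ, d.IsDiag → (u * d * uᴴ).IsDiag ∧ (uᴴ * d * u).IsDiag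

/-- A set `U` of matrices is a graphing if the star-subalgebra of `Mₙ(ℂ)` generated by the
diagonal matrices together with `U` is all of `Mₙ(ℂ)`. -/
def IsGraphing {n : ℕ} (U : Set (Matrix (Fin n) (Fin n) ℂ)) : Prop :=
  StarAlgebra.adjoin ℂ ({d : Matrix (Fin n) (Fin n) ℂ | d.IsDiag} ∪ U) = ⊤

/-- The evaluation of a word: each letter is a matrix together with a Boolean indicating
whether the letter is the matrix itself (`true`) or its conjugate-transpose (`false`). -/
noncomputable def wordEval {n : ℕ} (w : List (Matrix (Fin n) (Fin n) ℂ × Bool)) :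
    Matrix (Fin n) (Fin n) ℂ :=
  (w.map fun p => if p.2 then p.1 else p.1ᴴ).prod

/-- A formally reduced word in `U`: a nonempty sequence of letters `(uᵢ, εᵢ)` with `uᵢ ∈ U`,
such that no letter is immediately followed by the same matrix with the opposite exponent. -/
def IsReducedWord {n : ℕ} (U : Set (Matrix (Fin n) (Fin n) ℂ))
    (w : List (Matrix (Fin n) (Fin n) ℂ × Bool)) : Prop :=
  w ≠ [] ∧ (∀ p ∈ w, p.1 ∈ U) ∧
    List.Chain' (fun a b => ¬(b.1 = a.1 ∧ b.2 ≠ a.2)) w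

/-- `U` is a treeing if the evaluation of every formally reduced word in `U` has all diagonal
entries equal to `0`. -/
def IsTreeing {n : ℕ} (U : Set (Matrix (Fin n) (Fin n) ℂ)) : Prop :=
  ∀ w, IsReducedWord U w → ∀ i, wordEval w i i = 0

/-- The edge matrix units of a simple graph `G` on `Fin n`: one standard matrix unit
`E_{ij}` for each edge `{i, j}` of `G` with `i < j`. -/
def edgeUnits {n : ℕ} (G : SimpleGraph (Fin n)) : Set (Matrix (Fin n) (Fin n) ℂ) :=
  {u | ∃ i j : Fin n, i < j ∧ G.Adj i j ∧ u = Matrix.single i j (1 : ℂ)}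

lemma stdBasisMatrix_one_conjTranspose {n : ℕ} (i j : Fin n) :
    (Matrix.single i j (1 : ℂ))ᴴ = Matrix.single j i (1 : ℂ) := by
  ext a b
  simp [Matrix.single, Matrix.conjTranspose_apply, and_comm]

/-- Matrices supported on pairs of vertices in the same connected component. -/
def compSub {n : ℕ} (G : SimpleGraph (Fin n)) : StarSubalgebra ℂ (Matrix (Fin n) (Fin n) ℂ) where
  carrier := {A | ∀ i j, ¬ G.Reachable i j → A i j = 0}
  mul_mem' := by
    intro A B hA hB i j hij
    rw [Matrix.mul_apply]
    refine Finset.sum_eq_zero fun k _ => ?_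
    by_cases h1 : G.Reachable i k
    · by_cases h2 : G.Reachable k j
      · exact absurd (h1.trans h2) hij
      · rw [hB k j h2, mul_zero]
    · rw [hA i k h1, zero_mul]
  add_mem' := by
    intro A B hA hB i j hij
    simp [hA i j hij, hB i j hij]
  algebraMap_mem' := by
    intro c i j hij
    have : i ≠ j := fun h => hij (h ▸ SimpleGraph.Reachable.refl i)
    simp [Matrix.algebraMap_matrix_apply, this]
  star_mem' := by
    intro A hA i j hij
    have : ¬ G.Reachable j i := fun h => hij h.symm
    simp [Matrix.conjTranspose_apply, hA j i this]

lemma stdBasisMatrix_mem_adjoin {n : ℕ} (G : SimpleGraph (Fin n)) {i j : Fin n}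
    (h : G.Reachable i j) :
    Matrix.single i j (1 : ℂ) ∈
      StarAlgebra.adjoin ℂ ({d : Matrix (Fin n) (Fin n) ℂ | d.IsDiag} ∪ edgeUnits G) := by
  obtain ⟨p⟩ := h
  induction p with
  | nil =>
    apply StarAlgebra.subset_adjoin
    left
    show (Matrix.single _ _ (1 : ℂ)).IsDiag
    intro a b hab
    apply Matrix.single_apply_of_ne
    rintro ⟨rfl, rfl⟩
    exact hab rfl
  | @cons u v w huv p ih =>
    have huvmem : Matrix.single u v (1 : ℂ) ∈
        StarAlgebra.adjoin ℂ ({d : Matrix (Fin n) (Fin n) ℂ | d.IsDiag} ∪ edgeUnits G) := by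
      rcases lt_trichotomy u v with hlt | heq | hgt
      · exact StarAlgebra.subset_adjoin ℂ _ (Or.inr ⟨u, v, hlt, huv, rfl⟩)
      · subst heq; exact (G.irrefl huv).elim
      · have : Matrix.single v u (1 : ℂ) ∈
            StarAlgebra.adjoin ℂ ({d : Matrix (Fin n) (Fin n) ℂ | d.IsDiag} ∪ edgeUnits G) :=
          StarAlgebra.subset_adjoin ℂ _ (Or.inr ⟨v, u, hgt, huv.symm, rfl⟩)
        have := star_mem this
        rwa [Matrix.star_eq_conjTranspose, stdBasisMatrix_one_conjTranspose] at this
    have := mul_mem huvmem ih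
    rwa [Matrix.single_mul_single_same, one_mul] at this

/-- For `n ≥ 1` and a simple graph `G` on `Fin n`, the star-subalgebra of `Mₙ(ℂ)` generated
by the diagonal matrices together with the edge matrix units `U_G` is all of `Mₙ(ℂ)`
(i.e. `U_G` is a graphing) if and only if `G` is connected. -/
theorem edgeUnits_graphing_iff_connected {n : ℕ} (hn : 1 ≤ n) (G : SimpleGraph (Fin n)) :
    IsGraphing (edgeUnits G) ↔ G.Connected := by
  constructor
  · intro h
    rw [SimpleGraph.connected_iff]
    refine ⟨?_, ⟨⟨0, hn⟩⟩⟩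
    intro i j
    by_contra hij
    have hle : StarAlgebra.adjoin ℂ ({d : Matrix (Fin n) (Fin n) ℂ | d.IsDiag} ∪ edgeUnits G)
        ≤ compSub G := by
      apply StarAlgebra.adjoin_le
      rintro u (hu | ⟨a, b, hab, hadj, rfl⟩)
      · intro x y hxy
        exact hu fun hxy' => hxy (hxy' ▸ SimpleGraph.Reachable.refl x)
      · intro x y hxy
        apply Matrix.single_apply_of_ne
        rintro ⟨rfl, rfl⟩
        exact hxy hadj.reachable
    have hmem : Matrix.single i j (1 : ℂ) ∈ compSub G := by
      apply hle
      rw [IsGraphing] at h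
      rw [h]
      trivial
    have := hmem i j hij
    rw [Matrix.single_apply_same] at this
    exact one_ne_zero this
  · intro hG
    rw [IsGraphing, eq_top_iff]
    intro A _
    rw [Matrix.matrix_eq_sum_single A]
    refine sum_mem fun i _ => sum_mem fun j _ => ?_
    have : Matrix.single i j (A i j) = A i j • Matrix.single i j (1 : ℂ) := by
      rw [Matrix.smul_single, smul_eq_mul, mul_one]
    rw [this]
    exact SMulMemClass.smul_mem _ (stdBasisMatrix_mem_adjoin G (hG.preconnected i j))
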